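/- Let (V₁, λ₁) and (V₂, λ₂) be nonsingular linking forms on finite abelian groups, and let L ⊆ V₁ × V₂ be a metaboliser of λ₁ ⊕ −λ₂ such that L ∩ (V₁ × 0) = 0 and L ∩ (0 × V₂) = 0. Then there exists an isometry f : (V₁, λ₁) → (V₂, λ₂) whose graph is L, i.e. L = { (v, f(v)) : v ∈ V₁ }. -/

import Mathlib

/-- `ℚ/ℤ`, realized as `AddCircle (1 : ℚ)`. -/
abbrev QmodZ : Type := AddCircle (1 : ℚ)

/-- For a subgroup `D` of an abelian group and `v ∉ D`, there is a character of the group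
vanishing on `D` but not at `v`. -/
lemma exists_vanishing_char {V : Type} [AddCommGroup V] (D : AddSubgroup V) {v : V}
    (hv : v ∉ D) : ∃ g : V →+ QmodZ, (∀ d ∈ D, g d = 0) ∧ g v ≠ 0 := by
  have hne : (QuotientAddGroup.mk' D v) ≠ 0 := by
    simpa [QuotientAddGroup.eq_zero_iff] using hv
  obtain ⟨c, hc⟩ := CharacterModule.exists_character_apply_ne_zero_of_ne_zero hne
  refine ⟨AddMonoidHom.mk' (fun x => c (QuotientAddGroup.mk' D x))
    (fun x y => by rw [map_add, map_add]), fun d hd => ?_, hc⟩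
  simp [(QuotientAddGroup.eq_zero_iff d).2 hd]

/-- Proposition 4.2(1): let `(V₁,λ₁)` and `(V₂,λ₂)` be nonsingular linking forms on finite
abelian groups and let `L ⊆ V₁ × V₂` be a metaboliser of `λ₁ ⊕ -λ₂` with
`L ∩ (V₁ × 0) = 0 = L ∩ (0 × V₂)`.  Then `L` is the graph of an isometry
`f : (V₁,λ₁) → (V₂,λ₂)`. -/
theorem metaboliser_is_graph {V₁ V₂ : Type} [AddCommGroup V₁] [AddCommGroup V₂]
    [Finite V₁] [Finite V₂]
    (l₁ : V₁ → V₁ → QmodZ) (l₂ : V₂ → V₂ → QmodZ)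
    -- biadditive and symmetric
    (h₁add : ∀ x y z : V₁, l₁ (x + y) z = l₁ x z + l₁ y z)
    (h₁symm : ∀ x y : V₁, l₁ x y = l₁ y x)
    (h₂add : ∀ x y z : V₂, l₂ (x + y) z = l₂ x z + l₂ y z)
    (h₂symm : ∀ x y : V₂, l₂ x y = l₂ y x)
    -- nonsingular: the adjoint map `x ↦ λ(x, -)` is injective and surjective onto
    -- `Hom(V, ℚ/ℤ)`
    (h₁inj : ∀ x : V₁, (∀ y : V₁, l₁ x y = 0) → x = 0)
    (h₁surj : ∀ g : V₁ →+ QmodZ, ∃ x : V₁, ∀ y : V₁, l₁ x y = g y)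
    (h₂inj : ∀ x : V₂, (∀ y : V₂, l₂ x y = 0) → x = 0)
    (h₂surj : ∀ g : V₂ →+ QmodZ, ∃ x : V₂, ∀ y : V₂, l₂ x y = g y)
    -- `L` is a metaboliser of `λ₁ ⊕ -λ₂`
    (L : AddSubgroup (V₁ × V₂))
    (hL : ∀ z : V₁ × V₂, z ∈ L ↔ ∀ w ∈ L, l₁ z.1 w.1 - l₂ z.2 w.2 = 0)
    -- `L ∩ (V₁ × 0) = 0` and `L ∩ (0 × V₂) = 0`
    (hL1 : ∀ v : V₁, (v, (0 : V₂)) ∈ L → v = 0)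
    (hL2 : ∀ w : V₂, ((0 : V₁), w) ∈ L → w = 0) :
    ∃ f : V₁ ≃+ V₂, (∀ x y : V₁, l₂ (f x) (f y) = l₁ x y) ∧
      (∀ z : V₁ × V₂, z ∈ L ↔ z.2 = f z.1) := by
  -- zero lemmas
  have l₁0 : ∀ y : V₁, l₁ 0 y = 0 := by
    intro y; have h := h₁add 0 0 y; simp at h; exact h
  have l₂0 : ∀ y : V₂, l₂ 0 y = 0 := by
    intro y; have h := h₂add 0 0 y; simp at h; exact h
  -- isotropy
  have hmem : ∀ z ∈ L, ∀ w ∈ L, l₁ z.1 w.1 = l₂ z.2 w.2 := by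
    intro z hz w hw
    exact sub_eq_zero.mp ((hL z).1 hz w hw)
  -- uniqueness in each coordinate
  have uniq1 : ∀ (v : V₁) (w w' : V₂), (v, w) ∈ L → (v, w') ∈ L → w = w' := by
    intro v w w' h h'
    have hsub : ((0 : V₁), w - w') ∈ L := by
      simpa [Prod.mk_sub_mk] using L.sub_mem h h'
    have := hL2 _ hsub
    linear_combination (norm := abel) this
  have uniq2 : ∀ (v v' : V₁) (w : V₂), (v, w) ∈ L → (v', w) ∈ L → v = v' := by
    intro v v' w h h'
    have hsub : (v - v', (0 : V₂)) ∈ L := by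
      simpa [Prod.mk_sub_mk] using L.sub_mem h h'
    have := hL1 _ hsub
    linear_combination (norm := abel) this
  -- surjectivity of the first projection
  have key1 : ∀ v : V₁, ∃ w : V₂, (v, w) ∈ L := by
    intro v
    by_contra hno
    push_neg at hno
    have hv : v ∉ L.map (AddMonoidHom.fst V₁ V₂) := by
      intro hmem'
      obtain ⟨z, hz, hz1⟩ := AddSubgroup.mem_map.mp hmem'
      exact hno z.2 (by simpa [← hz1] using hz)
    obtain ⟨g, hg0, hgv⟩ := exists_vanishing_char _ hv
    obtain ⟨x, hx⟩ := h₁surj g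
    have hxL : (x, (0 : V₂)) ∈ L := by
      rw [hL]
      intro w hw
      have hgw : g w.1 = 0 := hg0 w.1 (AddSubgroup.mem_map.mpr ⟨w, hw, rfl⟩)
      simp [hx w.1, hgw, l₂0]
    have hx0 := hL1 x hxL
    exact hgv (by rw [← hx v, hx0, l₁0])
  -- surjectivity of the second projection
  have key2 : ∀ w : V₂, ∃ v : V₁, (v, w) ∈ L := by
    intro w
    by_contra hno
    push_neg at hno
    have hw : w ∉ L.map (AddMonoidHom.snd V₁ V₂) := by
      intro hmem'
      obtain ⟨z, hz, hz1⟩ := AddSubgroup.mem_map.mp hmem'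
      exact hno z.1 (by simpa [← hz1] using hz)
    obtain ⟨g, hg0, hgw⟩ := exists_vanishing_char _ hw
    obtain ⟨x, hx⟩ := h₂surj g
    have hxL : ((0 : V₁), x) ∈ L := by
      rw [hL]
      intro z hz
      have hgz : g z.2 = 0 := hg0 z.2 (AddSubgroup.mem_map.mpr ⟨z, hz, rfl⟩)
      simp [hx z.2, hgz, l₁0]
    have hx0 := hL2 x hxL
    exact hgw (by rw [← hx w, hx0, l₂0])
  choose f hf using key1
  choose g hg using key2
  refine ⟨AddEquiv.mk' (Equiv.mk f g (fun v => uniq2 _ _ _ (hg (f v)) (hf v))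
      (fun w => uniq1 _ _ _ (hf (g w)) (hg w)))
      (fun v v' => uniq1 (v + v') _ _ (hf _)
        (by simpa [Prod.mk_add_mk] using L.add_mem (hf v) (hf v'))),
    fun x y => (hmem _ (hf x) _ (hf y)).symm, fun z => ?_⟩
  constructor
  · intro hz
    exact uniq1 z.1 z.2 (f z.1) (by simpa using hz) (hf z.1)
  · intro hz
    have hz' : z.2 = f z.1 := hz
    have := hf z.1
    rw [← hz'] at this
    simpa using this
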